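/- Let (A_i)_{i=1}^n and (B_i)_{i=1}^n be two sequences of d×d real matrices, and let p, q ∈ [1, ∞] satisfy 1/p + 1/q = 1. Then ‖Σ_{i=1}^n A_i B_i‖_{S^1} ≤ ‖(Σ_{i=1}^n A_i A_iᵀ)^{1/2}‖_{S^p} · ‖(Σ_{i=1}^n B_iᵀ B_i)^{1/2}‖_{S^q}. -/

import Mathlib

open Matrix ENNReal

/-- The spectral norm (largest singular value / `ℓ²` operator norm) of a real square matrix. -/
noncomputable def specNorm {d : ℕ} (A : Matrix (Fin d) (Fin d) ℝ) : ℝ :=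
  ‖(Matrix.toEuclideanCLM (𝕜 := ℝ) A : EuclideanSpace ℝ (Fin d) →L[ℝ] EuclideanSpace ℝ (Fin d))‖

/-- The singular values of a real square matrix (in some order), i.e. the square roots of
the eigenvalues of `Aᵀ A`. -/
noncomputable def singVals {d : ℕ} (A : Matrix (Fin d) (Fin d) ℝ) (j : Fin d) : ℝ :=
  Real.sqrt ((Matrix.isHermitian_conjTranspose_mul_self A).eigenvalues j)

/-- The Schatten `p`-norm of a real square matrix, `p ∈ [1,∞]`:
`(Σ_j 𝔰_j(A)^p)^{1/p}` for finite `p`, and the spectral norm for `p = ∞`. -/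
noncomputable def schattenNorm {d : ℕ} (p : ℝ≥0∞) (A : Matrix (Fin d) (Fin d) ℝ) : ℝ :=
  if p = ∞ then specNorm A else (∑ j, singVals A j ^ p.toReal) ^ (1 / p.toReal)

/-- The positive semidefinite square root of a matrix (junk value `0` if the matrix is
not positive semidefinite). -/
noncomputable def psdSqrt {d : ℕ} (M : Matrix (Fin d) (Fin d) ℝ) : Matrix (Fin d) (Fin d) ℝ := by
  classical exact if h : M.PosSemidef then
    h.1.eigenvectorUnitary.1 * diagonal (RCLike.ofReal ∘ Real.sqrt ∘ h.1.eigenvalues) *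
      (star h.1.eigenvectorUnitary : Matrix (Fin d) (Fin d) ℝ) else 0

section Helpers
variable {ι m : Type*} [Fintype ι] [Fintype m]

lemma dot_conjT_mulVec (M : Matrix m ι ℝ) (a : m → ℝ) (ξ : ι → ℝ) :
    a ⬝ᵥ (M *ᵥ ξ) = (Mᴴ *ᵥ a) ⬝ᵥ ξ := by
  simp only [dotProduct, mulVec, dotProduct, conjTranspose_apply, star_trivial,
    Finset.mul_sum, Finset.sum_mul]
  rw [Finset.sum_comm]
  congr 1; ext j; congr 1; ext i; ring

lemma dot_self_nonneg (v : ι → ℝ) : 0 ≤ v ⬝ᵥ v :=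
  Finset.sum_nonneg fun i _ => mul_self_nonneg _

lemma sum_dot (f : m → ι → ℝ) (w : ι → ℝ) :
    (∑ j, f j) ⬝ᵥ w = ∑ j, f j ⬝ᵥ w := by
  simp only [dotProduct, Finset.sum_apply, Finset.sum_mul]
  exact Finset.sum_comm

lemma dot_sum (w : ι → ℝ) (f : m → ι → ℝ) :
    w ⬝ᵥ (∑ j, f j) = ∑ j, w ⬝ᵥ f j := by
  simp only [dotProduct, Finset.sum_apply, Finset.mul_sum]
  exact Finset.sum_comm

lemma sum_smul_dot (v : m → ι → ℝ)
    (h2 : ∀ j j', j ≠ j' → v j ⬝ᵥ v j' = 0) (c : m → ℝ) :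
    (∑ j, c j • v j) ⬝ᵥ (∑ j, c j • v j) = ∑ j, (c j)^2 * (v j ⬝ᵥ v j) := by
  rw [sum_dot]
  apply Finset.sum_congr rfl
  intro j _
  rw [dot_sum]
  rw [Finset.sum_eq_single j
    (fun j' _ hne => by rw [smul_dotProduct, dotProduct_smul, h2 j j' (Ne.symm hne)]; simp)
    (fun h => absurd (Finset.mem_univ j) h)]
  rw [smul_dotProduct, dotProduct_smul]
  simp [smul_eq_mul, sq]
  ring

lemma bessel (v : m → ι → ℝ)
    (h1 : ∀ j, v j ⬝ᵥ v j ≤ 1) (h2 : ∀ j j', j ≠ j' → v j ⬝ᵥ v j' = 0)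
    (w : ι → ℝ) : ∑ j, (v j ⬝ᵥ w)^2 ≤ w ⬝ᵥ w := by
  set c : m → ℝ := fun j => v j ⬝ᵥ w with hc
  set P : ι → ℝ := ∑ j, c j • v j with hP
  have hPP : P ⬝ᵥ P = ∑ j, (c j)^2 * (v j ⬝ᵥ v j) := sum_smul_dot v h2 c
  have hPw : P ⬝ᵥ w = ∑ j, (c j)^2 := by
    rw [hP, sum_dot]
    congr 1; ext j; rw [smul_dotProduct]; simp [c, sq, smul_eq_mul]
  have h0 : 0 ≤ (w - P) ⬝ᵥ (w - P) := dot_self_nonneg _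
  have hexp : (w - P) ⬝ᵥ (w - P) = w ⬝ᵥ w - 2 * (P ⬝ᵥ w) + P ⬝ᵥ P := by
    rw [sub_dotProduct, dotProduct_sub, dotProduct_sub, dotProduct_comm P w]
    ring
  have hle : ∑ j, (c j)^2 * (v j ⬝ᵥ v j) ≤ ∑ j, (c j)^2 :=
    Finset.sum_le_sum fun j _ => by
      have := h1 j
      nlinarith [sq_nonneg (c j), mul_self_nonneg (c j)]
  rw [hexp, hPw, hPP] at h0
  linarith

lemma subst_bound (f g : m → ℝ) (hf : ∑ j, (f j)^2 ≤ 1) (hg : ∑ j, (g j)^2 ≤ 1) :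
    ∑ j, |f j| * |g j| ≤ 1 := by
  have h := Finset.sum_mul_sq_le_sq_mul_sq Finset.univ (fun j => |f j|) (fun j => |g j|)
  simp only [sq_abs] at h
  have hnn : (0:ℝ) ≤ ∑ j, |f j| * |g j| :=
    Finset.sum_nonneg fun j _ => mul_nonneg (abs_nonneg _) (abs_nonneg _)
  have hf0 : (0:ℝ) ≤ ∑ j, (f j)^2 := Finset.sum_nonneg fun j _ => sq_nonneg _
  have hg0 : (0:ℝ) ≤ ∑ j, (g j)^2 := Finset.sum_nonneg fun j _ => sq_nonneg _
  nlinarith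

end Helpers

lemma singVals_nonneg {d : ℕ} (A : Matrix (Fin d) (Fin d) ℝ) (j : Fin d) :
    0 ≤ singVals A j := Real.sqrt_nonneg _

lemma eigdataH {d : ℕ} (E : Matrix (Fin d) (Fin d) ℝ) :
    ∃ u : Fin d → Fin d → ℝ,
      (∀ k k', u k ⬝ᵥ u k' = if k = k' then 1 else 0) ∧
      (∀ a c : Fin d → ℝ, a ⬝ᵥ c = ∑ k, (u k ⬝ᵥ a) * (u k ⬝ᵥ c)) ∧
      (∀ k, (Eᴴ * E) *ᵥ u k = (singVals E k)^2 • u k) := by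
  have h' := Matrix.isHermitian_conjTranspose_mul_self E
  set b := h'.eigenvectorBasis with hb
  refine ⟨fun k => (b k).ofLp, ?_, ?_, ?_⟩
  · intro k k'
    have := orthonormal_iff_ite.mp b.orthonormal k k'
    rwa [EuclideanSpace.inner_eq_star_dotProduct, star_trivial, dotProduct_comm] at this
  · intro a c
    have h := b.sum_inner_mul_inner ((WithLp.equiv 2 _).symm a) ((WithLp.equiv 2 _).symm c)
    simp only [EuclideanSpace.inner_eq_star_dotProduct, star_trivial, Equiv.apply_symm_apply] at h
    change ∑ x, (b x).ofLp ⬝ᵥ a * c ⬝ᵥ (b x).ofLp = c ⬝ᵥ a at h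
    rw [dotProduct_comm a c, ← h]
    apply Finset.sum_congr rfl
    intro k _
    rw [dotProduct_comm c]
  · intro k
    have h := h'.mulVec_eigenvectorBasis k
    rw [← hb] at h
    rw [h]
    congr 1
    rw [show singVals E k = Real.sqrt (h'.eigenvalues k) from rfl]
    exact (Real.sq_sqrt ((Matrix.posSemidef_conjTranspose_mul_self E).eigenvalues_nonneg k)).symm

lemma eigdata {d : ℕ} (H : Matrix (Fin d) (Fin d) ℝ) (hH : H.PosSemidef) :
    ∃ u : Fin d → Fin d → ℝ,
      (∀ k k', u k ⬝ᵥ u k' = if k = k' then 1 else 0) ∧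
      (∀ a c : Fin d → ℝ, a ⬝ᵥ c = ∑ k, (u k ⬝ᵥ a) * (u k ⬝ᵥ c)) ∧
      (∀ k, H *ᵥ u k = (singVals (psdSqrt H) k)^2 • u k) := by
  have hmul : (psdSqrt H)ᴴ * (psdSqrt H) = H := by
    set U : Matrix (Fin d) (Fin d) ℝ := (hH.1.eigenvectorUnitary : Matrix (Fin d) (Fin d) ℝ) with hU
    have hdef : psdSqrt H = U * diagonal (RCLike.ofReal ∘ Real.sqrt ∘ hH.1.eigenvalues) * star U := by
      unfold psdSqrt; exact dif_pos hH
    have hUU : star U * U = 1 := Unitary.coe_star_mul_self _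
    have hspec := hH.1.spectral_theorem
    rw [Unitary.conjStarAlgAut_apply] at hspec
    conv_rhs => rw [hspec]
    rw [hdef, Matrix.star_eq_conjTranspose, conjTranspose_mul, conjTranspose_mul,
      conjTranspose_conjTranspose, diagonal_conjTranspose]
    simp only [Matrix.mul_assoc]
    rw [← Matrix.mul_assoc Uᴴ U, ← Matrix.star_eq_conjTranspose, hUU, Matrix.one_mul,
      ← Matrix.mul_assoc (diagonal _), diagonal_mul_diagonal]
    have hD : diagonal (fun i => (star (RCLike.ofReal ∘ Real.sqrt ∘ hH.1.eigenvalues) : Fin d → ℝ) i *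
        (RCLike.ofReal ∘ Real.sqrt ∘ hH.1.eigenvalues) i) = diagonal (RCLike.ofReal ∘ hH.1.eigenvalues) := by
      congr 1; funext i; simp [Real.mul_self_sqrt (hH.eigenvalues_nonneg i)]
    rw [hD]
  obtain ⟨u, h1, h2, h3⟩ := eigdataH (psdSqrt H)
  exact ⟨u, h1, h2, fun k => by have := h3 k; rw [hmul] at this; exact this⟩

lemma partner {d : ℕ} {ι : Type*} [Fintype ι] (E : Matrix ι (Fin d) ℝ) (s : Fin d → ℝ)
    (u : Fin d → Fin d → ℝ) (hu : ∀ k k', u k ⬝ᵥ u k' = if k = k' then 1 else 0)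
    (hEu : ∀ k, (Eᴴ * E) *ᵥ u k = (s k)^2 • u k) :
    ∃ v : Fin d → ι → ℝ,
      (∀ k, v k ⬝ᵥ v k ≤ 1) ∧ (∀ k k', k ≠ k' → v k ⬝ᵥ v k' = 0) ∧
      (∀ k, s k ≠ 0 → v k ⬝ᵥ v k = 1) ∧
      (∀ k, E *ᵥ u k = s k • v k) := by
  classical
  have key : ∀ k k', (E *ᵥ u k) ⬝ᵥ (E *ᵥ u k') = (s k)^2 * (u k ⬝ᵥ u k') := by
    intro k k'
    rw [dot_conjT_mulVec E (E *ᵥ u k) (u k'), mulVec_mulVec, hEu k, smul_dotProduct]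
    simp [smul_eq_mul]
  have hone : ∀ k, s k ≠ 0 →
      ((s k)⁻¹ • (E *ᵥ u k)) ⬝ᵥ ((s k)⁻¹ • (E *ᵥ u k)) = 1 := by
    intro k hk
    rw [smul_dotProduct, dotProduct_smul, key k k, hu k k, if_pos rfl]
    simp only [smul_eq_mul, mul_one, sq]
    rw [show (s k)⁻¹ * ((s k)⁻¹ * (s k * s k)) = ((s k)⁻¹ * s k) * ((s k)⁻¹ * s k) by ring,
      inv_mul_cancel₀ hk, one_mul]
  refine ⟨fun k => if s k = 0 then 0 else (s k)⁻¹ • (E *ᵥ u k), ?_, ?_, ?_, ?_⟩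
  · intro k
    beta_reduce
    by_cases hk : s k = 0
    · simp [hk]
    · rw [if_neg hk, hone k hk]
  · intro k k' hne
    beta_reduce
    by_cases hk : s k = 0
    · simp [hk]
    · by_cases hk' : s k' = 0
      · simp [hk']
      · rw [if_neg hk, if_neg hk', smul_dotProduct, dotProduct_smul, key k k',
          hu k k', if_neg hne]
        simp
  · intro k hk
    beta_reduce
    rw [if_neg hk, hone k hk]
  · intro k
    beta_reduce
    by_cases hk : s k = 0
    · have h0 : (E *ᵥ u k) ⬝ᵥ (E *ᵥ u k) = 0 := by
        rw [key k k, hk, hu k k, if_pos rfl]; ring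
      rw [dotProduct_self_eq_zero] at h0
      simp [hk, h0]
    · rw [if_neg hk, smul_smul, mul_inv_cancel₀ hk, one_smul]

lemma singVals_le_specNorm {d : ℕ} (A : Matrix (Fin d) (Fin d) ℝ) (j : Fin d) :
    singVals A j ≤ specNorm A := by
  have h' := Matrix.isHermitian_conjTranspose_mul_self A
  set b := h'.eigenvectorBasis with hbdef
  set u : Fin d → ℝ := (b j).ofLp with hu
  have hnorm1 : ‖b j‖ = 1 := b.orthonormal.1 j
  have huu : u ⬝ᵥ u = 1 := by
    have := orthonormal_iff_ite.mp b.orthonormal j j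
    rw [EuclideanSpace.inner_eq_star_dotProduct, star_trivial] at this
    simpa [hu] using this
  have happ : (Matrix.toEuclideanCLM (𝕜 := ℝ) A) (b j) = (WithLp.equiv 2 _).symm (A *ᵥ u) := by
    have h1 : b j = (WithLp.equiv 2 _).symm u := by rw [hu]; simp
    rw [h1]; rfl
  have hb2 : ‖(Matrix.toEuclideanCLM (𝕜 := ℝ) A) (b j)‖^2 = h'.eigenvalues j := by
    rw [← real_inner_self_eq_norm_sq, happ, EuclideanSpace.inner_eq_star_dotProduct,
      star_trivial]
    change (A *ᵥ u) ⬝ᵥ (A *ᵥ u) = _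
    rw [dot_conjT_mulVec A (A *ᵥ u) u, mulVec_mulVec]
    have he : (Aᴴ * A) *ᵥ u = h'.eigenvalues j • u := h'.mulVec_eigenvectorBasis j
    rw [he, smul_dotProduct, smul_eq_mul, huu, mul_one]
  have hs : singVals A j = ‖(Matrix.toEuclideanCLM (𝕜 := ℝ) A) (b j)‖ := by
    rw [show singVals A j = Real.sqrt (h'.eigenvalues j) from rfl, ← hb2]
    exact Real.sqrt_sq (norm_nonneg _)
  rw [hs]
  calc ‖(Matrix.toEuclideanCLM (𝕜 := ℝ) A) (b j)‖
      ≤ ‖(Matrix.toEuclideanCLM (𝕜 := ℝ) A : EuclideanSpace ℝ (Fin d) →L[ℝ] EuclideanSpace ℝ (Fin d))‖ * ‖b j‖ :=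
        ContinuousLinearMap.le_opNorm _ _
    _ = specNorm A := by rw [hnorm1, mul_one]; rfl

lemma specNorm_nonneg {d : ℕ} (A : Matrix (Fin d) (Fin d) ℝ) : 0 ≤ specNorm A :=
  norm_nonneg _

lemma schattenNorm_one_eq {d : ℕ} (X : Matrix (Fin d) (Fin d) ℝ) :
    schattenNorm 1 X = ∑ k, singVals X k := by
  rw [schattenNorm, if_neg (by simp : (1:ℝ≥0∞) ≠ ∞)]
  simp [Real.rpow_one]

lemma schattenNorm_top_eq {d : ℕ} (X : Matrix (Fin d) (Fin d) ℝ) :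
    schattenNorm ∞ X = specNorm X := by
  rw [schattenNorm, if_pos rfl]

lemma core {d : ℕ} {ι : Type*} [Fintype ι]
    (C : Matrix (Fin d) ι ℝ) (D : Matrix ι (Fin d) ℝ)
    (p q : ℝ≥0∞) (hp : 1 ≤ p) (hq : 1 ≤ q) (hpq : 1 / p + 1 / q = 1) :
    schattenNorm 1 (C * D) ≤
      schattenNorm p (psdSqrt (C * Cᴴ)) * schattenNorm q (psdSqrt (Dᴴ * D)) := by
  classical
  set X := C * D with hX
  set rk : Fin d → ℝ := singVals X with hrk
  obtain ⟨y, hy_on, hy_par, hy_eig⟩ := eigdataH X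
  obtain ⟨x, hx_norm, hx_orth, hx_one, hXy⟩ := partner X rk y hy_on hy_eig
  set GA := C * Cᴴ with hGA
  set sA : Fin d → ℝ := singVals (psdSqrt GA) with hsA
  obtain ⟨u, hu_on, hu_par, hu_eig⟩ := eigdata GA (Matrix.posSemidef_self_mul_conjTranspose C)
  have huC : ∀ k, ((Cᴴ)ᴴ * Cᴴ) *ᵥ u k = (sA k)^2 • u k := by
    intro k; rw [conjTranspose_conjTranspose]; exact hu_eig k
  obtain ⟨v, hv_norm, hv_orth, hv_one, hCu⟩ := partner Cᴴ sA u hu_on huC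
  set GB := Dᴴ * D with hGB
  set tB : Fin d → ℝ := singVals (psdSqrt GB) with htB
  obtain ⟨z, hz_on, hz_par, hz_eig⟩ := eigdata GB (Matrix.posSemidef_conjTranspose_mul_self D)
  obtain ⟨w, hw_norm, hw_orth, hw_one, hDz⟩ := partner D tB z hz_on hz_eig
  -- nonnegativity
  have hrknn : ∀ k, 0 ≤ rk k := fun k => singVals_nonneg X k
  have hsAnn : ∀ j, 0 ≤ sA j := fun j => singVals_nonneg _ j
  have htBnn : ∀ l, 0 ≤ tB l := fun l => singVals_nonneg _ l
  set β : Fin d → Fin d → ℝ := fun j l => w l ⬝ᵥ v j with hβ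
  set γ : Fin d → Fin d → ℝ := fun j l => ∑ k, (u j ⬝ᵥ x k) * (z l ⬝ᵥ y k) with hγ
  -- the expansion of each singular value of X
  have hrk_eq : ∀ k, rk k = x k ⬝ᵥ (X *ᵥ y k) := by
    intro k
    rw [hXy k, dotProduct_smul, smul_eq_mul]
    by_cases hk : rk k = 0
    · rw [hk]; ring
    · rw [dotProduct_comm, hx_one k hk, mul_one]
  have hexp : ∀ k, rk k = ∑ j, ∑ l, sA j * tB l * β j l * ((u j ⬝ᵥ x k) * (z l ⬝ᵥ y k)) := by
    intro k
    rw [hrk_eq k, hX, ← mulVec_mulVec, hu_par (x k) (C *ᵥ (D *ᵥ y k))]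
    apply Finset.sum_congr rfl
    intro j _
    rw [dot_conjT_mulVec C (u j) (D *ᵥ y k), hCu j, smul_dotProduct,
      dot_conjT_mulVec D (v j) (y k), hz_par (Dᴴ *ᵥ v j) (y k)]
    simp only [dot_conjT_mulVec Dᴴ, conjTranspose_conjTranspose, hDz, smul_dotProduct]
    simp only [smul_eq_mul, Finset.mul_sum]
    apply Finset.sum_congr rfl
    intro l _
    ring
  
  have on_le : ∀ (g : Fin d → Fin d → ℝ), (∀ a b, g a ⬝ᵥ g b = if a = b then 1 else 0) →
      ∀ a, g a ⬝ᵥ g a ≤ 1 := fun g hg a => le_of_eq (by rw [hg a a, if_pos rfl])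
  have on_orth : ∀ (g : Fin d → Fin d → ℝ), (∀ a b, g a ⬝ᵥ g b = if a = b then 1 else 0) →
      ∀ a b, a ≠ b → g a ⬝ᵥ g b = 0 := fun g hg a b hab => by rw [hg a b, if_neg hab]
  have hsum : ∑ k, rk k = ∑ j, ∑ l, sA j * tB l * β j l * γ j l := by
    rw [Finset.sum_congr rfl (fun k _ => hexp k), Finset.sum_comm]
    apply Finset.sum_congr rfl
    intro j _
    rw [Finset.sum_comm]
    apply Finset.sum_congr rfl
    intro l _
    rw [show γ j l = ∑ k, (u j ⬝ᵥ x k) * (z l ⬝ᵥ y k) from rfl, Finset.mul_sum]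
  set M : Fin d → Fin d → ℝ := fun j l => |β j l| * |γ j l| with hM
  have hMnn : ∀ j l, 0 ≤ M j l := fun j l => mul_nonneg (abs_nonneg _) (abs_nonneg _)
  have habs : ∑ k, rk k ≤ ∑ j, ∑ l, sA j * tB l * M j l := by
    rw [hsum]
    apply Finset.sum_le_sum; intro j _
    apply Finset.sum_le_sum; intro l _
    calc sA j * tB l * β j l * γ j l ≤ |sA j * tB l * β j l * γ j l| := le_abs_self _
      _ = sA j * tB l * M j l := by
          rw [show M j l = |β j l| * |γ j l| from rfl]
          rw [abs_mul, abs_mul, abs_mul, abs_of_nonneg (hsAnn j), abs_of_nonneg (htBnn l),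
            mul_assoc]
  have hMcol : ∀ l, ∑ j, M j l ≤ 1 := by
    intro l
    apply subst_bound (fun j => β j l) (fun j => γ j l)
    · calc ∑ j, (β j l)^2 = ∑ j, (v j ⬝ᵥ w l)^2 := by
            apply Finset.sum_congr rfl; intro j _
            rw [show β j l = w l ⬝ᵥ v j from rfl, dotProduct_comm]
        _ ≤ w l ⬝ᵥ w l := bessel v hv_norm hv_orth (w l)
        _ ≤ 1 := hw_norm l
    · have hγrep : ∀ j, γ j l = u j ⬝ᵥ (∑ k, (z l ⬝ᵥ y k) • x k) := by
        intro j
        rw [dot_sum, show γ j l = ∑ k, (u j ⬝ᵥ x k) * (z l ⬝ᵥ y k) from rfl]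
        apply Finset.sum_congr rfl; intro k _
        rw [dotProduct_smul, smul_eq_mul]; ring
      calc ∑ j, (γ j l)^2 = ∑ j, (u j ⬝ᵥ (∑ k, (z l ⬝ᵥ y k) • x k))^2 := by
            apply Finset.sum_congr rfl; intro j _; rw [hγrep j]
        _ ≤ (∑ k, (z l ⬝ᵥ y k) • x k) ⬝ᵥ (∑ k, (z l ⬝ᵥ y k) • x k) :=
            bessel u (on_le u hu_on) (on_orth u hu_on) _
        _ = ∑ k, (z l ⬝ᵥ y k)^2 * (x k ⬝ᵥ x k) := sum_smul_dot x hx_orth _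
        _ ≤ ∑ k, (z l ⬝ᵥ y k)^2 * 1 :=
            Finset.sum_le_sum fun k _ => mul_le_mul_of_nonneg_left (hx_norm k) (sq_nonneg _)
        _ = ∑ k, (y k ⬝ᵥ z l)^2 := by
            apply Finset.sum_congr rfl; intro k _; rw [mul_one, dotProduct_comm]
        _ ≤ z l ⬝ᵥ z l := bessel y (on_le y hy_on) (on_orth y hy_on) (z l)
        _ ≤ 1 := on_le z hz_on l
  have hMrow : ∀ j, ∑ l, M j l ≤ 1 := by
    intro j
    apply subst_bound (fun l => β j l) (fun l => γ j l)
    · calc ∑ l, (β j l)^2 = ∑ l, (w l ⬝ᵥ v j)^2 := rfl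
        _ ≤ v j ⬝ᵥ v j := bessel w hw_norm hw_orth (v j)
        _ ≤ 1 := hv_norm j
    · have hγrep : ∀ l, γ j l = z l ⬝ᵥ (∑ k, (u j ⬝ᵥ x k) • y k) := by
        intro l
        rw [dot_sum, show γ j l = ∑ k, (u j ⬝ᵥ x k) * (z l ⬝ᵥ y k) from rfl]
        apply Finset.sum_congr rfl; intro k _
        rw [dotProduct_smul, smul_eq_mul]
      calc ∑ l, (γ j l)^2 = ∑ l, (z l ⬝ᵥ (∑ k, (u j ⬝ᵥ x k) • y k))^2 := by
            apply Finset.sum_congr rfl; intro l _; rw [hγrep l]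
        _ ≤ (∑ k, (u j ⬝ᵥ x k) • y k) ⬝ᵥ (∑ k, (u j ⬝ᵥ x k) • y k) :=
            bessel z (on_le z hz_on) (on_orth z hz_on) _
        _ = ∑ k, (u j ⬝ᵥ x k)^2 * (y k ⬝ᵥ y k) := sum_smul_dot y (on_orth y hy_on) _
        _ = ∑ k, (x k ⬝ᵥ u j)^2 := by
            apply Finset.sum_congr rfl; intro k _
            rw [hy_on k k, if_pos rfl, mul_one, dotProduct_comm]
        _ ≤ u j ⬝ᵥ u j := bessel x hx_norm hx_orth (u j)
        _ ≤ 1 := on_le u hu_on j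
  
  rw [schattenNorm_one_eq, ← hrk]
  by_cases hpinf : p = ∞
  · have hq1 : q = 1 := by
      rw [hpinf] at hpq
      simp only [one_div, ENNReal.inv_top, zero_add] at hpq
      exact ENNReal.inv_eq_one.mp hpq
    rw [hpinf, hq1, schattenNorm_top_eq, schattenNorm_one_eq, ← htB]
    set N := specNorm (psdSqrt GA) with hN
    have hNnn : 0 ≤ N := specNorm_nonneg _
    have hsAN : ∀ j, sA j ≤ N := fun j => singVals_le_specNorm _ j
    calc ∑ k, rk k ≤ ∑ j, ∑ l, sA j * tB l * M j l := habs
      _ ≤ ∑ j, ∑ l, N * (tB l * M j l) := by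
          apply Finset.sum_le_sum; intro j _; apply Finset.sum_le_sum; intro l _
          calc sA j * tB l * M j l = sA j * (tB l * M j l) := by ring
            _ ≤ N * (tB l * M j l) :=
                mul_le_mul_of_nonneg_right (hsAN j) (mul_nonneg (htBnn l) (hMnn j l))
      _ = ∑ l, ∑ j, N * (tB l * M j l) := Finset.sum_comm
      _ ≤ N * ∑ l, tB l := by
          rw [Finset.mul_sum]
          apply Finset.sum_le_sum
          intro l _
          have hfac : ∑ j, N * (tB l * M j l) = (N * tB l) * ∑ j, M j l := by
            rw [Finset.mul_sum]
            apply Finset.sum_congr rfl; intro j _; ring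
          rw [hfac]
          calc (N * tB l) * ∑ j, M j l ≤ (N * tB l) * 1 :=
                mul_le_mul_of_nonneg_left (hMcol l) (mul_nonneg hNnn (htBnn l))
            _ = N * tB l := mul_one _
  · by_cases hqinf : q = ∞
    · have hp1 : p = 1 := by
        rw [hqinf] at hpq
        simp only [one_div, ENNReal.inv_top, add_zero] at hpq
        exact ENNReal.inv_eq_one.mp hpq
      rw [hp1, hqinf, schattenNorm_top_eq, schattenNorm_one_eq, ← hsA]
      set N := specNorm (psdSqrt GB) with hN
      have hNnn : 0 ≤ N := specNorm_nonneg _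
      have htBN : ∀ l, tB l ≤ N := fun l => singVals_le_specNorm _ l
      calc ∑ k, rk k ≤ ∑ j, ∑ l, sA j * tB l * M j l := habs
        _ ≤ ∑ j, ∑ l, (sA j * N) * M j l := by
            apply Finset.sum_le_sum; intro j _; apply Finset.sum_le_sum; intro l _
            calc sA j * tB l * M j l = tB l * (sA j * M j l) := by ring
              _ ≤ N * (sA j * M j l) :=
                  mul_le_mul_of_nonneg_right (htBN l) (mul_nonneg (hsAnn j) (hMnn j l))
              _ = (sA j * N) * M j l := by ring
        _ ≤ (∑ j, sA j) * N := by
            rw [Finset.sum_mul]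
            apply Finset.sum_le_sum; intro j _
            rw [← Finset.mul_sum]
            calc (sA j * N) * ∑ l, M j l ≤ (sA j * N) * 1 :=
                  mul_le_mul_of_nonneg_left (hMrow j) (mul_nonneg (hsAnn j) hNnn)
              _ = sA j * N := mul_one _
    · -- both finite: genuine Hölder
      have hp0 : p ≠ 0 := (zero_lt_one.trans_le hp).ne'
      have hq0 : q ≠ 0 := (zero_lt_one.trans_le hq).ne'
      set pr := p.toReal with hprdef
      set qr := q.toReal with hqrdef
      have hprpos : 0 < pr := ENNReal.toReal_pos hp0 hpinf
      have hqrpos : 0 < qr := ENNReal.toReal_pos hq0 hqinf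
      have hinv : 1/pr + 1/qr = 1 := by
        have h := congrArg ENNReal.toReal hpq
        rw [ENNReal.toReal_add (by rw [one_div]; exact ENNReal.inv_ne_top.mpr hp0)
          (by rw [one_div]; exact ENNReal.inv_ne_top.mpr hq0)] at h
        simpa [one_div, ENNReal.toReal_inv] using h
      have hpr1 : 1 ≤ pr := by
        rw [show (1:ℝ) = (1:ℝ≥0∞).toReal by simp]
        exact ENNReal.toReal_mono hpinf hp
      have hprgt1 : 1 < pr := by
        rcases lt_or_eq_of_le hpr1 with h | h
        · exact h
        · exfalso
          rw [← h] at hinv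
          have h2 : 1/qr = 0 := by
            have : (1:ℝ)/1 = 1 := by norm_num
            linarith [hinv, this]
          have h3 := one_div_pos.mpr hqrpos
          linarith
      have hconj : pr.HolderConjugate qr :=
        Real.holderConjugate_iff.mpr ⟨hprgt1, by rw [← one_div, ← one_div]; exact hinv⟩
      rw [schattenNorm, if_neg hpinf, schattenNorm, if_neg hqinf, ← hsA, ← htB,
        ← hprdef, ← hqrdef]
      have Hh := Real.inner_le_Lp_mul_Lq (Finset.univ : Finset (Fin d × Fin d))
        (fun jl => sA jl.1 * (M jl.1 jl.2) ^ (1/pr))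
        (fun jl => tB jl.2 * (M jl.1 jl.2) ^ (1/qr)) hconj
      have hL : (∑ jl : Fin d × Fin d,
          (sA jl.1 * (M jl.1 jl.2) ^ (1/pr)) * (tB jl.2 * (M jl.1 jl.2) ^ (1/qr)))
          = ∑ j, ∑ l, sA j * tB l * M j l := by
        rw [Fintype.sum_prod_type]
        apply Finset.sum_congr rfl; intro j _
        apply Finset.sum_congr rfl; intro l _
        have hMM : (M j l) ^ (1/pr) * (M j l) ^ (1/qr) = M j l := by
          rw [← Real.rpow_add' (hMnn j l) (by rw [hinv]; exact one_ne_zero), hinv,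
            Real.rpow_one]
        calc (sA j * (M j l)^(1/pr)) * (tB l * (M j l)^(1/qr))
            = sA j * tB l * ((M j l)^(1/pr) * (M j l)^(1/qr)) := by ring
          _ = sA j * tB l * M j l := by rw [hMM]
      have hfp : ∀ jl : Fin d × Fin d,
          |sA jl.1 * (M jl.1 jl.2)^(1/pr)|^pr = sA jl.1 ^ pr * M jl.1 jl.2 := by
        intro jl
        rw [abs_of_nonneg (mul_nonneg (hsAnn _) (Real.rpow_nonneg (hMnn _ _) _)),
          Real.mul_rpow (hsAnn _) (Real.rpow_nonneg (hMnn _ _) _),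
          ← Real.rpow_mul (hMnn _ _), one_div_mul_cancel hprpos.ne', Real.rpow_one]
      have hfq : ∀ jl : Fin d × Fin d,
          |tB jl.2 * (M jl.1 jl.2)^(1/qr)|^qr = tB jl.2 ^ qr * M jl.1 jl.2 := by
        intro jl
        rw [abs_of_nonneg (mul_nonneg (htBnn _) (Real.rpow_nonneg (hMnn _ _) _)),
          Real.mul_rpow (htBnn _) (Real.rpow_nonneg (hMnn _ _) _),
          ← Real.rpow_mul (hMnn _ _), one_div_mul_cancel hqrpos.ne', Real.rpow_one]
      have hsumP : (∑ jl : Fin d × Fin d, |sA jl.1 * (M jl.1 jl.2)^(1/pr)|^pr)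
          ≤ ∑ j, sA j ^ pr := by
        rw [Finset.sum_congr rfl (fun jl _ => hfp jl), Fintype.sum_prod_type]
        calc ∑ j, ∑ l, sA j ^ pr * M j l = ∑ j, sA j ^ pr * ∑ l, M j l := by
              apply Finset.sum_congr rfl; intro j _; rw [Finset.mul_sum]
          _ ≤ ∑ j, sA j ^ pr * 1 := Finset.sum_le_sum fun j _ =>
              mul_le_mul_of_nonneg_left (hMrow j) (Real.rpow_nonneg (hsAnn j) _)
          _ = ∑ j, sA j ^ pr := by simp
      have hsumQ : (∑ jl : Fin d × Fin d, |tB jl.2 * (M jl.1 jl.2)^(1/qr)|^qr)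
          ≤ ∑ l, tB l ^ qr := by
        rw [Finset.sum_congr rfl (fun jl _ => hfq jl), Fintype.sum_prod_type,
          Finset.sum_comm]
        calc ∑ l, ∑ j, tB l ^ qr * M j l = ∑ l, tB l ^ qr * ∑ j, M j l := by
              apply Finset.sum_congr rfl; intro l _; rw [Finset.mul_sum]
          _ ≤ ∑ l, tB l ^ qr * 1 := Finset.sum_le_sum fun l _ =>
              mul_le_mul_of_nonneg_left (hMcol l) (Real.rpow_nonneg (htBnn l) _)
          _ = ∑ l, tB l ^ qr := by simp
      have hPfac : (∑ jl : Fin d × Fin d, |sA jl.1 * (M jl.1 jl.2)^(1/pr)|^pr)^(1/pr)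
          ≤ (∑ j, sA j ^ pr)^(1/pr) :=
        Real.rpow_le_rpow (Finset.sum_nonneg fun jl _ =>
          Real.rpow_nonneg (abs_nonneg _) _) hsumP (le_of_lt (one_div_pos.mpr hprpos))
      have hQfac : (∑ jl : Fin d × Fin d, |tB jl.2 * (M jl.1 jl.2)^(1/qr)|^qr)^(1/qr)
          ≤ (∑ l, tB l ^ qr)^(1/qr) :=
        Real.rpow_le_rpow (Finset.sum_nonneg fun jl _ =>
          Real.rpow_nonneg (abs_nonneg _) _) hsumQ (le_of_lt (one_div_pos.mpr hqrpos))
      calc ∑ k, rk k ≤ ∑ j, ∑ l, sA j * tB l * M j l := habs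
        _ = ∑ jl : Fin d × Fin d,
            (sA jl.1 * (M jl.1 jl.2) ^ (1/pr)) * (tB jl.2 * (M jl.1 jl.2) ^ (1/qr)) := hL.symm
        _ ≤ (∑ jl : Fin d × Fin d, |sA jl.1 * (M jl.1 jl.2)^(1/pr)|^pr)^(1/pr) *
            (∑ jl : Fin d × Fin d, |tB jl.2 * (M jl.1 jl.2)^(1/qr)|^qr)^(1/qr) := Hh
        _ ≤ (∑ j, sA j ^ pr)^(1/pr) * (∑ l, tB l ^ qr)^(1/qr) := by
            apply mul_le_mul hPfac hQfac
            · exact Real.rpow_nonneg (Finset.sum_nonneg fun jl _ =>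
                Real.rpow_nonneg (abs_nonneg _) _) _
            · exact Real.rpow_nonneg (Finset.sum_nonneg fun j _ =>
                Real.rpow_nonneg (hsAnn j) _) _

/-- for `d×d` matrices `A₁,…,Aₙ, B₁,…,Bₙ` and Hölder conjugate `p, q ∈ [1,∞]`,
`‖Σ AᵢBᵢ‖_{S¹} ≤ ‖(Σ AᵢAᵢᵀ)^{1/2}‖_{S^p} ⬝ ‖(Σ BᵢᵀBᵢ)^{1/2}‖_{S^q}`. -/
theorem stmt4 {d n : ℕ} (A B : Fin n → Matrix (Fin d) (Fin d) ℝ)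
    (p q : ℝ≥0∞) (hp : 1 ≤ p) (hq : 1 ≤ q) (hpq : 1 / p + 1 / q = 1) :
    schattenNorm 1 (∑ i, A i * B i) ≤
      schattenNorm p (psdSqrt (∑ i, A i * (A i)ᴴ)) *
        schattenNorm q (psdSqrt (∑ i, (B i)ᴴ * B i)) := by
  classical
  let C : Matrix (Fin d) (Fin n × Fin d) ℝ := fun j ik => A ik.1 j ik.2
  let D : Matrix (Fin n × Fin d) (Fin d) ℝ := fun ik l => B ik.1 ik.2 l
  have h1 : (∑ i, A i * B i) = C * D := by
    ext j l
    rw [Matrix.mul_apply]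
    simp only [Matrix.sum_apply, Matrix.mul_apply, Fintype.sum_prod_type, C, D]
  have h2 : (∑ i, A i * (A i)ᴴ) = C * Cᴴ := by
    ext j l
    rw [Matrix.mul_apply]
    simp only [Matrix.sum_apply, Matrix.mul_apply, Matrix.conjTranspose_apply, star_trivial,
      Fintype.sum_prod_type, C]
    rfl
  have h3 : (∑ i, (B i)ᴴ * B i) = Dᴴ * D := by
    ext j l
    rw [Matrix.mul_apply]
    simp only [Matrix.sum_apply, Matrix.mul_apply, Matrix.conjTranspose_apply, star_trivial,
      Fintype.sum_prod_type, D]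
    rfl
  rw [h1, h2, h3]
  exact core C D p q hp hq hpq
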